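/- Let C be a triangulated category equipped with a weight structure w and a t-structure t adjacent to w (i.e. C^{t≤0} = C_{w≥0}), and let m ≤ n be integers. Then: (a) for every object M of C there exists a distinguished triangle P →g M →h I_0 → P[1] such that I_0 ∈ C[m,n] and P is without weights m,…,n; moreover, for any such triangle, (b) a morphism j with target M kills weights m,…,n if and only if j factors through g, and (c) every morphism from M to an object of C[m,n] factors through h. -/

import Mathlib

open CategoryTheory CategoryTheory.Limits CategoryTheory.Pretriangulated ZeroObject

universe v u

variable (C : Type u) [Category.{v} C] [HasZeroObject C] [Preadditive C] [HasShift C ℤ]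
  [∀ n : ℤ, (shiftFunctor C n).Additive] [Pretriangulated C]

/-- A weight structure on a triangulated category `C`: a pair of retract-closed classes
`le = C_{w≤0}` and `ge = C_{w≥0}` satisfying semi-invariance with respect to translations,
orthogonality, and the existence of weight decompositions. -/
structure WeightStructure where
  /-- the class `C_{w≤0}` -/
  le : Set C
  /-- the class `C_{w≥0}` -/
  ge : Set C
  /-- `C_{w≤0}` is closed under retracts -/
  le_retract : ∀ ⦃X Y : C⦄ (i : X ⟶ Y) (r : Y ⟶ X), i ≫ r = 𝟙 X → le Y → le X
  /-- `C_{w≥0}` is closed under retracts -/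
  ge_retract : ∀ ⦃X Y : C⦄ (i : X ⟶ Y) (r : Y ⟶ X), i ≫ r = 𝟙 X → ge Y → ge X
  /-- `C_{w≤0} ⊆ C_{w≤0}[1]`, i.e. `X ∈ C_{w≤0} → X[-1] ∈ C_{w≤0}` -/
  le_shift : ∀ ⦃X : C⦄, le X → le ((shiftFunctor C (-1 : ℤ)).obj X)
  /-- `C_{w≥0}[1] ⊆ C_{w≥0}`, i.e. `X ∈ C_{w≥0} → X[1] ∈ C_{w≥0}` -/
  ge_shift : ∀ ⦃X : C⦄, ge X → ge ((shiftFunctor C (1 : ℤ)).obj X)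
  /-- orthogonality: `Hom(X, Y[1]) = 0` for `X ∈ C_{w≤0}`, `Y ∈ C_{w≥0}` -/
  orth : ∀ ⦃X Y : C⦄, le X → ge Y → ∀ f : X ⟶ (shiftFunctor C (1 : ℤ)).obj Y, f = 0
  /-- existence of weight decompositions -/
  decomp : ∀ M : C, ∃ (X Y : C) (f : X ⟶ M) (g : M ⟶ Y)
      (h : Y ⟶ (shiftFunctor C (1 : ℤ)).obj X),
      Triangle.mk f g h ∈ (distTriang C) ∧ le X ∧ ge ((shiftFunctor C (-1 : ℤ)).obj Y)

variable {C}

namespace WeightStructure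

/-- `X ∈ C_{w≤i} = C_{w≤0}[i]`, i.e. `X[-i] ∈ C_{w≤0}`. -/
def leDeg (w : WeightStructure C) (i : ℤ) (X : C) : Prop :=
  w.le ((shiftFunctor C (-i)).obj X)

/-- `X ∈ C_{w≥i} = C_{w≥0}[i]`, i.e. `X[-i] ∈ C_{w≥0}`. -/
def geDeg (w : WeightStructure C) (i : ℤ) (X : C) : Prop :=
  w.ge ((shiftFunctor C (-i)).obj X)

/-- The triangle `A → M → B → A[1]` is an `m`-weight decomposition of `M`:
it is distinguished, `A ∈ C_{w≤m}` and `B ∈ C_{w≥m+1}`. -/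
def IsWeightDecomp (w : WeightStructure C) (m : ℤ) {A M B : C}
    (f : A ⟶ M) (g : M ⟶ B) (h : B ⟶ (shiftFunctor C (1 : ℤ)).obj A) : Prop :=
  Triangle.mk f g h ∈ (distTriang C) ∧ w.leDeg m A ∧ w.geDeg (m + 1) B

/-- `g : M ⟶ N` kills weights `m,…,n`: there exist an `n`-weight decomposition of `M` and an
`(m-1)`-weight decomposition of `N` such that the composite `w_{≤n}M → M → N → w_{≥m}N` is `0`. -/
def KillsWeights (w : WeightStructure C) (m n : ℤ) {M N : C} (g : M ⟶ N) : Prop :=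
  ∃ (A B A' B' : C) (f : A ⟶ M) (p : M ⟶ B) (δ : B ⟶ (shiftFunctor C (1 : ℤ)).obj A)
    (f' : A' ⟶ N) (p' : N ⟶ B') (δ' : B' ⟶ (shiftFunctor C (1 : ℤ)).obj A'),
    w.IsWeightDecomp n f p δ ∧ w.IsWeightDecomp (m - 1) f' p' δ' ∧ f ≫ g ≫ p' = 0

/-- `M` is without weights `m,…,n` if `𝟙 M` kills weights `m,…,n`. -/
def WithoutWeights (w : WeightStructure C) (m n : ℤ) (M : C) : Prop :=
  w.KillsWeights m n (𝟙 M)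

end WeightStructure

variable (C) in
/-- A `t`-structure on `C`: a pair of isomorphism-closed classes `le = C^{t≤0}` and
`ge = C^{t≥0}` with `C^{t≤0}[1] ⊆ C^{t≤0}`, `C^{t≥0} ⊆ C^{t≥0}[1]`, `Hom(X, Y) = 0` for
`X ∈ C^{t≤0}[1]`, `Y ∈ C^{t≥0}`, and `t`-decompositions `A → M → B → A[1]` with
`A ∈ C^{t≤0}`, `B ∈ C^{t≥0}[-1]`. -/
structure TStructure where
  /-- the class `C^{t≤0}` -/
  le : Set C
  /-- the class `C^{t≥0}` -/
  ge : Set C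
  le_iso : ∀ ⦃X Y : C⦄, (X ≅ Y) → le X → le Y
  ge_iso : ∀ ⦃X Y : C⦄, (X ≅ Y) → ge X → ge Y
  /-- `C^{t≤0}[1] ⊆ C^{t≤0}` -/
  le_shift : ∀ ⦃X : C⦄, le X → le ((shiftFunctor C (1 : ℤ)).obj X)
  /-- `C^{t≥0} ⊆ C^{t≥0}[1]` -/
  ge_shift : ∀ ⦃X : C⦄, ge X → ge ((shiftFunctor C (-1 : ℤ)).obj X)
  /-- `Hom(X, Y) = 0` for `X ∈ C^{t≤0}[1]` and `Y ∈ C^{t≥0}` -/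
  orth : ∀ ⦃X Y : C⦄, le X → ge Y → ∀ f : (shiftFunctor C (1 : ℤ)).obj X ⟶ Y, f = 0
  /-- existence of `t`-decompositions -/
  decomp : ∀ M : C, ∃ (A B : C) (f : A ⟶ M) (g : M ⟶ B)
      (h : B ⟶ (shiftFunctor C (1 : ℤ)).obj A),
      Triangle.mk f g h ∈ (distTriang C) ∧ le A ∧ ge ((shiftFunctor C (1 : ℤ)).obj B)

/-- `X ∈ C[m,n] = C^{t≤-m} ∩ C^{t≥-n}` where `C^{t≤-m} = C^{t≤0}[m]` and
`C^{t≥-n} = C^{t≥0}[n]`. -/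
def TStructure.interval (t : TStructure C) (m n : ℤ) (X : C) : Prop :=
  t.le ((shiftFunctor C (-m)).obj X) ∧ t.ge ((shiftFunctor C (-n)).obj X)


section Helpers

/-- composition of shifts, as an isomorphism -/
noncomputable def shiftIso' (X : C) (a b c : ℤ) (h : a + b = c) :
    (shiftFunctor C b).obj ((shiftFunctor C a).obj X) ≅ (shiftFunctor C c).obj X :=
  ((shiftFunctorAdd' C a b c h).app X).symm

namespace WeightStructure

variable (w : WeightStructure C)

lemma le_iso {X Y : C} (e : X ≅ Y) (h : w.le X) : w.le Y :=
  w.le_retract e.inv e.hom (by simp) h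

lemma ge_iso {X Y : C} (e : X ≅ Y) (h : w.ge X) : w.ge Y :=
  w.ge_retract e.inv e.hom (by simp) h

lemma le_shift_down (k : ℕ) {X : C} (h : w.le X) :
    w.le ((shiftFunctor C (-(k : ℤ))).obj X) := by
  induction k with
  | zero =>
      simp only [Nat.cast_zero, neg_zero]
      exact w.le_iso ((shiftFunctorZero C ℤ).app X).symm h
  | succ p ih =>
      have e : (shiftFunctor C (-1 : ℤ)).obj ((shiftFunctor C (-(p : ℤ))).obj X) ≅
          (shiftFunctor C (-((p + 1 : ℕ) : ℤ))).obj X :=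
        shiftIso' X (-(p : ℤ)) (-1) _ (by push_cast; ring)
      exact w.le_iso e (w.le_shift ih)

lemma ge_shift_up (k : ℕ) {X : C} (h : w.ge X) :
    w.ge ((shiftFunctor C ((k : ℤ))).obj X) := by
  induction k with
  | zero =>
      simp only [Nat.cast_zero]
      exact w.ge_iso ((shiftFunctorZero C ℤ).app X).symm h
  | succ p ih =>
      have e : (shiftFunctor C (1 : ℤ)).obj ((shiftFunctor C ((p : ℤ))).obj X) ≅
          (shiftFunctor C (((p + 1 : ℕ) : ℤ))).obj X :=
        shiftIso' X ((p : ℤ)) 1 _ (by push_cast; ring)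
      exact w.ge_iso e (w.ge_shift ih)

lemma le_mono {X : C} {a b : ℤ} (hab : a ≤ b) (h : w.le ((shiftFunctor C b).obj X)) :
    w.le ((shiftFunctor C a).obj X) := by
  obtain ⟨k, rfl⟩ : ∃ k : ℕ, a = b + (-(k : ℤ)) := ⟨(b - a).toNat, by omega⟩
  exact w.le_iso (shiftIso' X b (-(k : ℤ)) _ rfl) (w.le_shift_down k h)

lemma ge_mono {X : C} {a b : ℤ} (hab : a ≤ b) (h : w.ge ((shiftFunctor C a).obj X)) :
    w.ge ((shiftFunctor C b).obj X) := by
  obtain ⟨k, rfl⟩ : ∃ k : ℕ, b = a + (k : ℤ) := ⟨(b - a).toNat, by omega⟩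
  exact w.ge_iso (shiftIso' X a ((k : ℤ)) _ rfl) (w.ge_shift_up k h)

/-- orthogonality: `Hom(C_{w ≤ -a}, C_{w ≥ -b}) = 0` when `b < a`. -/
lemma orth' {X Y : C} {a b : ℤ} (hX : w.le ((shiftFunctor C a).obj X))
    (hY : w.ge ((shiftFunctor C b).obj Y)) (hab : b < a) (f : X ⟶ Y) : f = 0 := by
  have hY' : w.ge ((shiftFunctor C (a - 1)).obj Y) := w.ge_mono (by omega) hY
  have e : (shiftFunctor C (1 : ℤ)).obj ((shiftFunctor C (a - 1)).obj Y) ≅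
      (shiftFunctor C a).obj Y := shiftIso' Y (a - 1) 1 a (by ring)
  have h0 : (shiftFunctor C a).map f ≫ e.inv = 0 := w.orth hX hY' _
  have h1 : (shiftFunctor C a).map f = 0 := by
    have := h0 =≫ e.hom
    simpa using this
  exact (shiftFunctor C a).map_injective (by rw [h1, Functor.map_zero])

end WeightStructure

namespace TStructure

variable (t : TStructure C)

lemma le_shift_up (k : ℕ) {X : C} (h : t.le X) :
    t.le ((shiftFunctor C ((k : ℤ))).obj X) := by
  induction k with
  | zero =>
      simp only [Nat.cast_zero]
      exact t.le_iso ((shiftFunctorZero C ℤ).app X).symm h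
  | succ p ih =>
      have e : (shiftFunctor C (1 : ℤ)).obj ((shiftFunctor C ((p : ℤ))).obj X) ≅
          (shiftFunctor C (((p + 1 : ℕ) : ℤ))).obj X :=
        shiftIso' X ((p : ℤ)) 1 _ (by push_cast; ring)
      exact t.le_iso e (t.le_shift ih)

lemma ge_shift_down (k : ℕ) {X : C} (h : t.ge X) :
    t.ge ((shiftFunctor C (-(k : ℤ))).obj X) := by
  induction k with
  | zero =>
      simp only [Nat.cast_zero, neg_zero]
      exact t.ge_iso ((shiftFunctorZero C ℤ).app X).symm h
  | succ p ih =>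
      have e : (shiftFunctor C (-1 : ℤ)).obj ((shiftFunctor C (-(p : ℤ))).obj X) ≅
          (shiftFunctor C (-((p + 1 : ℕ) : ℤ))).obj X :=
        shiftIso' X (-(p : ℤ)) (-1) _ (by push_cast; ring)
      exact t.ge_iso e (t.ge_shift ih)

lemma le_mono {X : C} {a b : ℤ} (hab : a ≤ b) (h : t.le ((shiftFunctor C a).obj X)) :
    t.le ((shiftFunctor C b).obj X) := by
  obtain ⟨k, rfl⟩ : ∃ k : ℕ, b = a + (k : ℤ) := ⟨(b - a).toNat, by omega⟩
  exact t.le_iso (shiftIso' X a ((k : ℤ)) _ rfl) (t.le_shift_up k h)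

lemma ge_mono {X : C} {a b : ℤ} (hab : a ≤ b) (h : t.ge ((shiftFunctor C b).obj X)) :
    t.ge ((shiftFunctor C a).obj X) := by
  obtain ⟨k, rfl⟩ : ∃ k : ℕ, a = b + (-(k : ℤ)) := ⟨(b - a).toNat, by omega⟩
  exact t.ge_iso (shiftIso' X b (-(k : ℤ)) _ rfl) (t.ge_shift_down k h)

/-- orthogonality: `Hom(C^{t ≤ -a}, C^{t ≥ -b}) = 0` when `a < b`. -/
lemma orth' {X Y : C} {a b : ℤ} (hX : t.le ((shiftFunctor C a).obj X))
    (hY : t.ge ((shiftFunctor C b).obj Y)) (hab : a < b) (f : X ⟶ Y) : f = 0 := by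
  have hX' : t.le ((shiftFunctor C (b - 1)).obj X) := t.le_mono (by omega) hX
  have e : (shiftFunctor C (1 : ℤ)).obj ((shiftFunctor C (b - 1)).obj X) ≅
      (shiftFunctor C b).obj X := shiftIso' X (b - 1) 1 b (by ring)
  have h0 : e.hom ≫ (shiftFunctor C b).map f = 0 := t.orth hX' hY _
  have h1 : (shiftFunctor C b).map f = 0 := by
    have := e.inv ≫= h0
    simpa using this
  exact (shiftFunctor C b).map_injective (by rw [h1, Functor.map_zero])

end TStructure

/-- shifting a distinguished triangle. -/
lemma shift_dist {T : Triangle C} (hT : T ∈ distTriang C) (k : ℤ) :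
    ∃ (f' : (shiftFunctor C k).obj T.obj₁ ⟶ (shiftFunctor C k).obj T.obj₂)
      (g' : (shiftFunctor C k).obj T.obj₂ ⟶ (shiftFunctor C k).obj T.obj₃)
      (δ' : (shiftFunctor C k).obj T.obj₃ ⟶
        (shiftFunctor C (1 : ℤ)).obj ((shiftFunctor C k).obj T.obj₁)),
      Triangle.mk f' g' δ' ∈ distTriang C :=
  ⟨_, _, _, Pretriangulated.Triangle.shift_distinguished _ hT k⟩

/-- replacing the middle object of a distinguished triangle by an isomorphic object. -/
lemma dist_of_iso₂ {T : Triangle C} (hT : T ∈ distTriang C) {N : C} (e : T.obj₂ ≅ N) :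
    Triangle.mk (T.mor₁ ≫ e.hom) (e.inv ≫ T.mor₂) T.mor₃ ∈ distTriang C := by
  refine isomorphic_distinguished _ hT _ ?_
  exact Triangle.isoMk _ _ (Iso.refl _) e.symm (Iso.refl _)
    (by show (T.mor₁ ≫ e.hom) ≫ e.inv = 𝟙 T.obj₁ ≫ T.mor₁; simp)
    (by show (e.inv ≫ T.mor₂) ≫ 𝟙 T.obj₃ = e.inv ≫ T.mor₂; simp)
    (by show T.mor₃ ≫ (shiftFunctor C (1 : ℤ)).map (𝟙 T.obj₁) = 𝟙 T.obj₃ ≫ T.mor₃; simp)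

/-- existence of a `k`-weight decomposition of any object. -/
lemma WeightStructure.exists_wdecomp (w : WeightStructure C) (k : ℤ) (M : C) :
    ∃ (A B : C) (f : A ⟶ M) (g : M ⟶ B) (δ : B ⟶ (shiftFunctor C (1 : ℤ)).obj A),
      w.IsWeightDecomp k f g δ := by
  obtain ⟨A₀, B₀, f₀, g₀, δ₀, hd, hA₀, hB₀⟩ := w.decomp ((shiftFunctor C (-k)).obj M)
  obtain ⟨f', g', δ', hd'⟩ := shift_dist hd k
  let e : (shiftFunctor C k).obj ((shiftFunctor C (-k)).obj M) ≅ M :=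
    shiftIso' M (-k) k 0 (by ring) ≪≫ (shiftFunctorZero C ℤ).app M
  refine ⟨_, _, f' ≫ e.hom, e.inv ≫ g', δ', dist_of_iso₂ hd' e, ?_, ?_⟩
  · exact w.le_iso ((shiftIso' A₀ k (-k) 0 (by ring) ≪≫ (shiftFunctorZero C ℤ).app A₀).symm) hA₀
  · exact w.ge_iso ((shiftIso' B₀ k (-(k + 1)) (-1) (by ring)).symm) hB₀

/-- existence of `t`-decompositions at any cut. -/
lemma TStructure.exists_tdecomp (t : TStructure C) (k : ℤ) (M : C) :
    ∃ (A B : C) (f : A ⟶ M) (g : M ⟶ B) (δ : B ⟶ (shiftFunctor C (1 : ℤ)).obj A),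
      Triangle.mk f g δ ∈ (distTriang C) ∧ t.le ((shiftFunctor C k).obj A) ∧
        t.ge ((shiftFunctor C (k + 1)).obj B) := by
  obtain ⟨A₀, B₀, f₀, g₀, δ₀, hd, hA₀, hB₀⟩ := t.decomp ((shiftFunctor C k).obj M)
  obtain ⟨f', g', δ', hd'⟩ := shift_dist hd (-k)
  let e : (shiftFunctor C (-k)).obj ((shiftFunctor C k).obj M) ≅ M :=
    shiftIso' M k (-k) 0 (by ring) ≪≫ (shiftFunctorZero C ℤ).app M
  refine ⟨_, _, f' ≫ e.hom, e.inv ≫ g', δ', dist_of_iso₂ hd' e, ?_, ?_⟩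
  · exact t.le_iso ((shiftIso' A₀ (-k) k 0 (by ring) ≪≫ (shiftFunctorZero C ℤ).app A₀).symm) hA₀
  · exact t.ge_iso ((shiftIso' B₀ (-k) (k + 1) 1 (by ring)).symm) hB₀

/-- maps from `t`-le objects to highly `t`-ge objects vanish (unshifted form). -/
lemma TStructure.hom_zero_of_le (t : TStructure C) {U B : C} (hU : t.le U)
    (hB : t.ge ((shiftFunctor C (1 : ℤ)).obj B)) (u : U ⟶ B) : u = 0 :=
  (shiftFunctor C (1 : ℤ)).map_injective
    (by rw [Functor.map_zero]; exact t.orth hU hB ((shiftFunctor C (1 : ℤ)).map u))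

/-- the aisle `C^{t≤•}` is closed under extensions. -/
lemma TStructure.ext_le (t : TStructure C) {T : Triangle C} (hT : T ∈ distTriang C) {a : ℤ}
    (h₁ : t.le ((shiftFunctor C a).obj T.obj₁)) (h₃ : t.le ((shiftFunctor C a).obj T.obj₃)) :
    t.le ((shiftFunctor C a).obj T.obj₂) := by
  obtain ⟨f', g', δ', hT'⟩ := shift_dist hT a
  obtain ⟨A, B, fd, gd, δd, hdist, hA, hB⟩ := t.decomp ((shiftFunctor C a).obj T.obj₂)
  have h1 : f' ≫ gd = 0 := t.hom_zero_of_le h₁ hB _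
  obtain ⟨gd', hgd'⟩ : ∃ gd' : (shiftFunctor C a).obj T.obj₃ ⟶ B, gd = g' ≫ gd' :=
    Triangle.yoneda_exact₂ _ hT' gd h1
  have hgd0 : gd = 0 := by rw [hgd', t.hom_zero_of_le h₃ hB gd', comp_zero]
  obtain ⟨r, hr⟩ : ∃ r : (shiftFunctor C (1 : ℤ)).obj A ⟶ B, 𝟙 B = δd ≫ r :=
    Triangle.yoneda_exact₃ _ hdist (𝟙 B) (by show gd ≫ 𝟙 B = 0; rw [hgd0]; simp)
  have hr0 : r = 0 := t.hom_zero_of_le (t.le_shift hA) hB r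
  have hBzero : IsZero B := by rw [IsZero.iff_id_eq_zero, hr, hr0, comp_zero]
  have hiso : IsIso fd := (Triangle.isZero₃_iff_isIso₁ _ hdist).1 hBzero
  exact t.le_iso (asIso fd) hA

/-- characterization of the coaisle by orthogonality. -/
lemma TStructure.ge_char (t : TStructure C) {X : C} (j : ℤ)
    (H : ∀ (Y : C), t.le ((shiftFunctor C (j - 1)).obj Y) → ∀ f : Y ⟶ X, f = 0) :
    t.ge ((shiftFunctor C j).obj X) := by
  obtain ⟨A, B, fd, gd, δd, hdist, hA, hB⟩ := t.exists_tdecomp (j - 1) X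
  have hfd : fd = 0 := H A hA fd
  obtain ⟨r, hr⟩ : ∃ r : (shiftFunctor C (1 : ℤ)).obj A ⟶ B, 𝟙 _ = r ≫ δd :=
    Triangle.coyoneda_exact₃ _ (rot_of_distTriang _ hdist)
    (𝟙 ((shiftFunctor C (1 : ℤ)).obj A))
    (by show 𝟙 ((shiftFunctor C (1 : ℤ)).obj A) ≫ (-(shiftFunctor C (1 : ℤ)).map fd) = 0; rw [hfd]; simp)
  have hr0 : r = 0 := by
    refine t.orth' (t.le_iso (shiftIso' A 1 (j - 2) (j - 1) (by ring)).symm hA) hB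
      (by omega) r
  have hA1zero : IsZero ((shiftFunctor C (1 : ℤ)).obj A) := by
    rw [IsZero.iff_id_eq_zero, hr, hr0, zero_comp]
  have hAzero : IsZero A := by
    rw [IsZero.iff_id_eq_zero]
    apply (shiftFunctor C (1 : ℤ)).map_injective
    rw [IsZero.iff_id_eq_zero] at hA1zero
    simpa using hA1zero
  have hiso : IsIso gd := (Triangle.isZero₁_iff_isIso₂ _ hdist).1 hAzero
  have hgoal : t.ge ((shiftFunctor C (j - 1 + 1)).obj X) :=
    t.ge_iso ((shiftFunctor C (j - 1 + 1)).mapIso (asIso gd)).symm hB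
  rw [show j - 1 + 1 = j by ring] at hgoal
  exact hgoal

/-- characterization of the aisle by orthogonality. -/
lemma TStructure.le_char (t : TStructure C) {X : C} (j : ℤ)
    (H : ∀ (Z : C), t.ge ((shiftFunctor C (j + 1)).obj Z) → ∀ f : X ⟶ Z, f = 0) :
    t.le ((shiftFunctor C j).obj X) := by
  obtain ⟨A, B, fd, gd, δd, hdist, hA, hB⟩ := t.exists_tdecomp j X
  have hgd : gd = 0 := H B hB gd
  obtain ⟨r, hr⟩ : ∃ r : (shiftFunctor C (1 : ℤ)).obj A ⟶ B, 𝟙 B = δd ≫ r :=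
    Triangle.yoneda_exact₃ _ hdist (𝟙 B) (by show gd ≫ 𝟙 B = 0; rw [hgd]; simp)
  have hr0 : r = 0 := by
    refine t.orth' (t.le_iso (shiftIso' A 1 (j - 1) j (by ring)).symm hA) hB (by omega) r
  have hBzero : IsZero B := by rw [IsZero.iff_id_eq_zero, hr, hr0, comp_zero]
  have hiso : IsIso fd := (Triangle.isZero₃_iff_isIso₁ _ hdist).1 hBzero
  exact t.le_iso ((shiftFunctor C j).mapIso (asIso fd)) hA

end Helpers

/-- Remark 2.2.2(2-3): if `t` is a `t`-structure adjacent to `w` (`C^{t≤0} = C_{w≥0}`), then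
every `M` fits in a distinguished triangle `P → M → I₀ → P[1]` with `I₀ ∈ C[m,n]` and `P`
without weights `m,…,n`; for any such triangle, a morphism `j` with target `M` kills weights
`m,…,n` iff it factors through `g : P ⟶ M`, and every morphism from `M` to an object of
`C[m,n]` factors through `h : M ⟶ I₀`. -/
theorem adjacent_tStructure_homOrthogonal (w : WeightStructure C) (t : TStructure C)
    (hadj : t.le = w.ge) (m n : ℤ) (hmn : m ≤ n) :
    (∀ M : C, ∃ (P I₀ : C) (g : P ⟶ M) (h : M ⟶ I₀)
        (δ : I₀ ⟶ (shiftFunctor C (1 : ℤ)).obj P),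
      Triangle.mk g h δ ∈ (distTriang C) ∧ t.interval m n I₀ ∧ w.WithoutWeights m n P) ∧
    (∀ (M P I₀ : C) (g : P ⟶ M) (h : M ⟶ I₀) (δ : I₀ ⟶ (shiftFunctor C (1 : ℤ)).obj P),
      Triangle.mk g h δ ∈ (distTriang C) → t.interval m n I₀ → w.WithoutWeights m n P →
      ((∀ (N : C) (j : N ⟶ M), w.KillsWeights m n j ↔ ∃ k : N ⟶ P, k ≫ g = j) ∧
       (∀ (Z : C) (φ : M ⟶ Z), t.interval m n Z → ∃ ψ : I₀ ⟶ Z, h ≫ ψ = φ))) := by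
  constructor
  · -- part (a): existence of the triangle
    intro M
    obtain ⟨L, R, f1, p1, δ1, hT1d, hL, hR⟩ := w.exists_wdecomp (m - 1) M
    have hL' : w.le ((shiftFunctor C (-(m - 1))).obj L) := hL
    have hRw : w.ge ((shiftFunctor C (-m)).obj R) := by
      have h0 : w.ge ((shiftFunctor C (-(m - 1 + 1))).obj R) := hR
      rwa [show -(m - 1 + 1) = -m by ring] at h0
    have hRt : t.le ((shiftFunctor C (-m)).obj R) := by rw [hadj]; exact hRw
    obtain ⟨Q, I₀, f2, q, δ2, hT2d, hQ, hI₀'⟩ := t.exists_tdecomp (-n - 1) R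
    have hI₀n : t.ge ((shiftFunctor C (-n)).obj I₀) := by
      rwa [show (-n - 1 + 1 : ℤ) = -n by ring] at hI₀'
    have hQw : w.ge ((shiftFunctor C (-n - 1)).obj Q) := hadj ▸ hQ
    have hI₀m : t.le ((shiftFunctor C (-m)).obj I₀) := by
      refine t.ext_le (rot_of_distTriang _ hT2d) (a := -m) hRt ?_
      exact t.le_iso (shiftIso' Q 1 (-m) (1 - m) (by ring)).symm (t.le_mono (by omega) hQ)
    set φ : Q ⟶ (shiftFunctor C (1 : ℤ)).obj L := f2 ≫ δ1 with hφ
    obtain ⟨P, i, p, hTPd⟩ := distinguished_cocone_triangle₂ φ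
    -- construct `g : P ⟶ M` compatible with both triangles
    obtain ⟨c, hc₁, hc₂⟩ : ∃ c : (shiftFunctor C (1 : ℤ)).obj P ⟶ (shiftFunctor C (1 : ℤ)).obj M,
        (-(shiftFunctor C (1 : ℤ)).map i) ≫ c = 𝟙 _ ≫ (-(shiftFunctor C (1 : ℤ)).map f1) ∧
        (-(shiftFunctor C (1 : ℤ)).map p) ≫ (shiftFunctor C (1 : ℤ)).map f2 = c ≫ (-(shiftFunctor C (1 : ℤ)).map p1) := complete_distinguished_triangle_morphism
      ((Triangle.mk i p φ).rotate.rotate) ((Triangle.mk f1 p1 δ1).rotate.rotate)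
      (rot_of_distTriang _ (rot_of_distTriang _ hTPd))
      (rot_of_distTriang _ (rot_of_distTriang _ hT1d))
      f2 (𝟙 _) (by show φ ≫ 𝟙 ((shiftFunctor C (1 : ℤ)).obj L) = f2 ≫ δ1; simp [hφ])
    set g : P ⟶ M := (shiftFunctor C (1 : ℤ)).preimage c with hgdef
    have hcg : (shiftFunctor C (1 : ℤ)).map g = c := Functor.map_preimage _ _
    have hg₁ : i ≫ g = f1 := by
      apply (shiftFunctor C (1 : ℤ)).map_injective
      have hh := hc₁
      rw [Preadditive.neg_comp, Category.id_comp, neg_inj] at hh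
      rw [Functor.map_comp, hcg]
      exact hh
    have hg₂ : g ≫ p1 = p ≫ f2 := by
      apply (shiftFunctor C (1 : ℤ)).map_injective
      have hh := hc₂
      rw [Preadditive.neg_comp, Preadditive.comp_neg, neg_inj] at hh
      rw [Functor.map_comp, Functor.map_comp, hcg]
      exact hh.symm
    obtain ⟨E, u, v, hT5d⟩ := distinguished_cocone_triangle g
    have hgu : g ≫ u = 0 := comp_distTriang_mor_zero₁₂ _ hT5d
    have hf1u : f1 ≫ u = 0 := by rw [← hg₁, Category.assoc, hgu, comp_zero]
    have hvg : v ≫ (shiftFunctor C (1 : ℤ)).map g = 0 := comp_distTriang_mor_zero₃₁ _ hT5d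
    have hφi : φ ≫ (shiftFunctor C (1 : ℤ)).map i = 0 := comp_distTriang_mor_zero₃₁ _ hTPd
    obtain ⟨κ, hκ⟩ : ∃ κ : I₀ ⟶ (shiftFunctor C (1 : ℤ)).obj P, δ1 ≫ (shiftFunctor C (1 : ℤ)).map i = q ≫ κ :=
        Triangle.yoneda_exact₂ _ hT2d (δ1 ≫ (shiftFunctor C (1 : ℤ)).map i)
      (by show f2 ≫ (δ1 ≫ (shiftFunctor C (1 : ℤ)).map i) = 0
          rw [← Category.assoc, ← hφ]; exact hφi)
    try simp only [Triangle.mk_mor₁, Triangle.mk_mor₂, Triangle.mk_mor₃] at hκ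
    -- `E ∈ C^{t ≥ -n}`
    have hEge : t.ge ((shiftFunctor C (-n)).obj E) := by
      refine t.ge_char (-n) ?_
      intro Y hY β
      have step1 : ∀ ψ : Y ⟶ M, ψ ≫ u = 0 := by
        intro ψ
        have h1 : (ψ ≫ p1) ≫ q = 0 := by
          rw [Category.assoc]
          exact t.orth' hY hI₀n (by omega) _
        obtain ⟨y, hy⟩ : ∃ y : Y ⟶ Q, ψ ≫ p1 = y ≫ f2 := Triangle.coyoneda_exact₂ _ hT2d (ψ ≫ p1) h1
        try simp only [Triangle.mk_mor₁, Triangle.mk_mor₂, Triangle.mk_mor₃] at hy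
        have h2 : y ≫ φ = 0 := by
          have hp1δ1 : p1 ≫ δ1 = 0 := comp_distTriang_mor_zero₂₃ _ hT1d
          rw [hφ, ← Category.assoc, ← hy, Category.assoc, hp1δ1, comp_zero]
        obtain ⟨z, hz⟩ : ∃ z : Y ⟶ P, y = z ≫ p := Triangle.coyoneda_exact₃ _ hTPd y h2
        try simp only [Triangle.mk_mor₁, Triangle.mk_mor₂, Triangle.mk_mor₃] at hz
        have h3 : (ψ - z ≫ g) ≫ p1 = 0 := by
          rw [Preadditive.sub_comp, hy, hz, Category.assoc, ← hg₂, ← Category.assoc, sub_self]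
        obtain ⟨l, hl⟩ : ∃ l : Y ⟶ L, ψ - z ≫ g = l ≫ f1 := Triangle.coyoneda_exact₂ _ hT1d (ψ - z ≫ g) h3
        try simp only [Triangle.mk_mor₁, Triangle.mk_mor₂, Triangle.mk_mor₃] at hl
        have h4 : ψ = l ≫ f1 + z ≫ g := by rw [← hl]; abel
        rw [h4, Preadditive.add_comp, Category.assoc, hf1u, comp_zero, Category.assoc, hgu, comp_zero,
          add_zero]
      have e1 : ((β ≫ v) ≫ (shiftFunctor C (1 : ℤ)).map p) ≫
          (shiftFunctor C (1 : ℤ)).map f2 = 0 := by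
        simp only [Category.assoc]
        rw [← Functor.map_comp, ← hg₂, Functor.map_comp, reassoc_of% hvg, zero_comp, comp_zero]
      obtain ⟨w₁, hw₁⟩ : ∃ w₁ : Y ⟶ I₀, (β ≫ v) ≫ (shiftFunctor C (1 : ℤ)).map p = w₁ ≫ δ2 := Triangle.coyoneda_exact₂ _
        (rot_of_distTriang _ (rot_of_distTriang _ hT2d)) ((β ≫ v) ≫ (shiftFunctor C (1 : ℤ)).map p)
        (by show ((β ≫ v) ≫ (shiftFunctor C (1 : ℤ)).map p) ≫ (-(shiftFunctor C (1 : ℤ)).map f2) = 0; rw [Preadditive.comp_neg, e1, neg_zero])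
      have hw₁0 : w₁ = 0 := t.orth' hY hI₀n (by omega) w₁
      have h5 : (β ≫ v) ≫ (shiftFunctor C (1 : ℤ)).map p = 0 := by
        rw [hw₁, hw₁0, zero_comp]
      obtain ⟨y₁, hy₁⟩ : ∃ y₁ : Y ⟶ (shiftFunctor C (1 : ℤ)).obj L, β ≫ v = y₁ ≫ (-(shiftFunctor C (1 : ℤ)).map i) :=
          Triangle.coyoneda_exact₃ _
        (rot_of_distTriang _ (rot_of_distTriang _ hTPd)) (β ≫ v)
        (by show (β ≫ v) ≫ (-(shiftFunctor C (1 : ℤ)).map p) = 0; rw [Preadditive.comp_neg, h5, neg_zero])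
      have h6 : (β ≫ v) ≫ (shiftFunctor C (1 : ℤ)).map g = 0 := by
        rw [Category.assoc, hvg, comp_zero]
      have h7 : y₁ ≫ (shiftFunctor C (1 : ℤ)).map f1 = 0 := by
        rw [hy₁] at h6
        simp only [Preadditive.neg_comp, Preadditive.comp_neg, Category.assoc, neg_eq_zero] at h6
        rw [← Functor.map_comp, hg₁] at h6
        exact h6
      obtain ⟨w₂, hw₂⟩ : ∃ w₂ : Y ⟶ R, y₁ = w₂ ≫ δ1 := Triangle.coyoneda_exact₂ _
        (rot_of_distTriang _ (rot_of_distTriang _ hT1d)) y₁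
        (by show y₁ ≫ (-(shiftFunctor C (1 : ℤ)).map f1) = 0; rw [Preadditive.comp_neg, h7, neg_zero])
      have hw₂q : w₂ ≫ q = 0 := t.orth' hY hI₀n (by omega) _
      have h8 : β ≫ v = 0 := by
        rw [hy₁, hw₂, Preadditive.comp_neg, Category.assoc, hκ, ← Category.assoc, hw₂q, zero_comp,
          neg_zero]
      obtain ⟨ψ, hψ⟩ : ∃ ψ : Y ⟶ M, β = ψ ≫ u := Triangle.coyoneda_exact₃ _ hT5d β h8
      try simp only [Triangle.mk_mor₁, Triangle.mk_mor₂, Triangle.mk_mor₃] at hψ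
      rw [hψ]
      exact step1 ψ
    -- `E ∈ C^{t ≤ -m}`
    have hEle : t.le ((shiftFunctor C (-m)).obj E) := by
      refine t.le_char (-m) ?_
      intro Z hZ α
      have h1 : f1 ≫ (u ≫ α) = 0 := by rw [← Category.assoc, hf1u, zero_comp]
      obtain ⟨ρ, hρ⟩ : ∃ ρ : R ⟶ Z, u ≫ α = p1 ≫ ρ := Triangle.yoneda_exact₂ _ hT1d (u ≫ α) h1
      try simp only [Triangle.mk_mor₁, Triangle.mk_mor₂, Triangle.mk_mor₃] at hρ
      have h2 : f2 ≫ ρ = 0 := t.orth' hQ hZ (by omega) _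
      obtain ⟨σ, hσ⟩ : ∃ σ : I₀ ⟶ Z, ρ = q ≫ σ := Triangle.yoneda_exact₂ _ hT2d ρ h2
      try simp only [Triangle.mk_mor₁, Triangle.mk_mor₂, Triangle.mk_mor₃] at hσ
      have hσ0 : σ = 0 := t.orth' hI₀m hZ (by omega) σ
      have h3 : u ≫ α = 0 := by rw [hρ, hσ, hσ0, comp_zero, comp_zero]
      obtain ⟨γ, hγ⟩ : ∃ γ : (shiftFunctor C (1 : ℤ)).obj P ⟶ Z, α = v ≫ γ := Triangle.yoneda_exact₃ _ hT5d α h3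
      let γ₁ : (shiftFunctor C (1 : ℤ)).obj P ⟶ Z := γ
      have hγ₁ : α = v ≫ γ₁ := hγ
      have hκγ : κ ≫ γ₁ = 0 := t.orth' hI₀m hZ (by omega) _
      have h4 : δ1 ≫ ((shiftFunctor C (1 : ℤ)).map i ≫ γ₁) = 0 := by
        rw [← Category.assoc, hκ, Category.assoc, hκγ, comp_zero]
      obtain ⟨μ, hμ⟩ : ∃ μ : (shiftFunctor C (1 : ℤ)).obj M ⟶ Z,
            (shiftFunctor C (1 : ℤ)).map i ≫ γ₁ = (-((shiftFunctor C (1 : ℤ)).map f1)) ≫ μ := Triangle.yoneda_exact₃ _ (rot_of_distTriang _ hT1d)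
        ((shiftFunctor C (1 : ℤ)).map i ≫ γ₁) h4
      let μ₁ : (shiftFunctor C (1 : ℤ)).obj M ⟶ Z := μ
      have hμ₁ : (shiftFunctor C (1 : ℤ)).map i ≫ γ₁ =
          (-((shiftFunctor C (1 : ℤ)).map f1)) ≫ μ₁ := hμ
      set γ' : (shiftFunctor C (1 : ℤ)).obj P ⟶ Z :=
        γ₁ + (shiftFunctor C (1 : ℤ)).map g ≫ μ₁ with hγ'
      have h5 : (shiftFunctor C (1 : ℤ)).map i ≫ γ' = 0 := by
        rw [hγ', Preadditive.comp_add, hμ₁, ← Category.assoc, ← Functor.map_comp, hg₁,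
          Preadditive.neg_comp]
        simp
      have h6 : v ≫ γ' = α := by
        rw [hγ', Preadditive.comp_add, ← hγ₁, ← Category.assoc, hvg, zero_comp, add_zero]
      obtain ⟨τ, hτ⟩ : ∃ τ : (shiftFunctor C (1 : ℤ)).obj Q ⟶ Z, γ' = (-(shiftFunctor C (1 : ℤ)).map p) ≫ τ :=
          Triangle.yoneda_exact₃ _
        (rot_of_distTriang _ (rot_of_distTriang _ hTPd)) γ'
        (by show (-(shiftFunctor C (1 : ℤ)).map i) ≫ γ' = 0; rw [Preadditive.neg_comp, h5, neg_zero])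
      have hQ1 : t.le ((shiftFunctor C (-n - 2)).obj ((shiftFunctor C (1 : ℤ)).obj Q)) :=
        t.le_iso (shiftIso' Q 1 (-n - 2) (-n - 1) (by ring)).symm hQ
      have hτ0 : τ = 0 := t.orth' hQ1 hZ (by omega) τ
      rw [← h6, hτ, hτ0, comp_zero, comp_zero]
    refine ⟨P, E, g, u, v, hT5d, ⟨hEle, hEge⟩, ?_⟩
    -- `P` is without weights `m, …, n`
    refine ⟨L, Q, L, Q, i, p, φ, i, p, φ, ⟨hTPd, ?_, ?_⟩, ⟨hTPd, ?_, ?_⟩, ?_⟩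
    · exact w.le_mono (by omega) hL'
    · show w.ge ((shiftFunctor C (-(n + 1))).obj Q)
      rwa [show -(n + 1) = -n - 1 by ring]
    · exact hL
    · show w.ge ((shiftFunctor C (-(m - 1 + 1))).obj Q)
      exact w.ge_mono (by omega) hQw
    · rw [Category.id_comp]
      exact comp_distTriang_mor_zero₁₂ _ hTPd
  · -- part (b) and (c)
    intro M P I₀ g h δ hTd hI hPwo
    obtain ⟨AP, BP, AP', BP', fP, pP, δP, fP', pP', δP',
      ⟨hTPnd, hAPn, hBPn⟩, ⟨hTPmd, hAPm, hBPm⟩, hfPpP'⟩ := hPwo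
    have hfPpP'0 : fP ≫ pP' = 0 := by simpa using hfPpP'
    obtain ⟨hIle, hIge⟩ := hI
    have hIlew : w.ge ((shiftFunctor C (-m)).obj I₀) := hadj ▸ hIle
    have hAPn' : w.le ((shiftFunctor C (-n)).obj AP) := hAPn
    have hBPn' : w.ge ((shiftFunctor C (-(n + 1))).obj BP) := hBPn
    have hAPm' : w.le ((shiftFunctor C (-(m - 1))).obj AP') := hAPm
    have hBPm' : w.ge ((shiftFunctor C (-(m - 1 + 1))).obj BP') := hBPm
    have hBPt : t.le ((shiftFunctor C (-(n + 1))).obj BP) := by rw [hadj]; exact hBPn'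
    constructor
    · intro N j
      constructor
      · rintro ⟨A, B, A', B', fN, pN, δN, fM', pM', δM',
          ⟨hTNd, hAn, hBn⟩, ⟨hTMd, hAm', hBm'⟩, hcomp⟩
        have h1 : (fN ≫ j) ≫ pM' = 0 := by
          rw [Category.assoc]; exact hcomp
        obtain ⟨cc, hcc⟩ : ∃ cc : A ⟶ A', fN ≫ j = cc ≫ fM' := Triangle.coyoneda_exact₂ _ hTMd (fN ≫ j) h1
        try simp only [Triangle.mk_mor₁, Triangle.mk_mor₂, Triangle.mk_mor₃] at hcc
        have hAm'' : w.le ((shiftFunctor C (-(m - 1))).obj A') := hAm'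
        have h2 : fM' ≫ h = 0 := w.orth' hAm'' hIlew (by omega) _
        have h3 : fN ≫ (j ≫ h) = 0 := by
          rw [← Category.assoc, hcc, Category.assoc, h2, comp_zero]
        obtain ⟨d, hd⟩ : ∃ d : B ⟶ I₀, j ≫ h = pN ≫ d := Triangle.yoneda_exact₂ _ hTNd (j ≫ h) h3
        try simp only [Triangle.mk_mor₁, Triangle.mk_mor₂, Triangle.mk_mor₃] at hd
        have hBt : t.le ((shiftFunctor C (-(n + 1))).obj B) := by
          rw [hadj]; exact hBn
        have hd0 : d = 0 := t.orth' hBt hIge (by omega) d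
        have hjh : j ≫ h = 0 := by rw [hd, hd0, comp_zero]
        obtain ⟨k, hk⟩ : ∃ k : N ⟶ P, j = k ≫ g := Triangle.coyoneda_exact₂ _ hTd j hjh
        try simp only [Triangle.mk_mor₁, Triangle.mk_mor₂, Triangle.mk_mor₃] at hk
        exact ⟨k, hk.symm⟩
      · rintro ⟨k, rfl⟩
        obtain ⟨AN, BN, fN, pN, δN, hTNd, hANn, hBNn⟩ := w.exists_wdecomp n N
        obtain ⟨AM, BM, fM, pM, δM, hTMd, hAMm, hBMm⟩ := w.exists_wdecomp (m - 1) M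
        refine ⟨AN, BN, AM, BM, fN, pN, δN, fM, pM, δM, ⟨hTNd, hANn, hBNn⟩,
          ⟨hTMd, hAMm, hBMm⟩, ?_⟩
        have hANn' : w.le ((shiftFunctor C (-n)).obj AN) := hANn
        have hBMm' : w.ge ((shiftFunctor C (-(m - 1 + 1))).obj BM) := hBMm
        have hα : (fN ≫ k) ≫ pP = 0 := w.orth' hANn' hBPn' (by omega) _
        obtain ⟨a₁, ha₁⟩ : ∃ a₁ : AN ⟶ AP, fN ≫ k = a₁ ≫ fP := Triangle.coyoneda_exact₂ _ hTPnd (fN ≫ k) hα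
        try simp only [Triangle.mk_mor₁, Triangle.mk_mor₂, Triangle.mk_mor₃] at ha₁
        have hα2 : (fN ≫ k) ≫ pP' = 0 := by
          rw [ha₁, Category.assoc, hfPpP'0, comp_zero]
        obtain ⟨a₂, ha₂⟩ : ∃ a₂ : AN ⟶ AP', fN ≫ k = a₂ ≫ fP' := Triangle.coyoneda_exact₂ _ hTPmd (fN ≫ k) hα2
        try simp only [Triangle.mk_mor₁, Triangle.mk_mor₂, Triangle.mk_mor₃] at ha₂
        have hz : fP' ≫ (g ≫ pM) = 0 := by
          rw [← Category.assoc]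
          exact w.orth' hAPm' hBMm' (by omega) _
        calc fN ≫ (k ≫ g) ≫ pM = (fN ≫ k) ≫ (g ≫ pM) := by
              simp only [Category.assoc]
          _ = a₂ ≫ (fP' ≫ (g ≫ pM)) := by rw [ha₂, Category.assoc]
          _ = 0 := by rw [hz, comp_zero]
    · intro Z φc hZ
      obtain ⟨hZle, hZge⟩ := hZ
      have hZlew : w.ge ((shiftFunctor C (-m)).obj Z) := hadj ▸ hZle
      obtain ⟨u₁, hu₁⟩ : ∃ u₁ : AP ⟶ AP', fP = u₁ ≫ fP' := Triangle.coyoneda_exact₂ _ hTPmd fP hfPpP'0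
      try simp only [Triangle.mk_mor₁, Triangle.mk_mor₂, Triangle.mk_mor₃] at hu₁
      have h1 : fP ≫ (g ≫ φc) = 0 := by
        rw [hu₁, Category.assoc]
        have h2 : fP' ≫ (g ≫ φc) = 0 := by
          rw [← Category.assoc]
          exact w.orth' hAPm' hZlew (by omega) _
        rw [h2, comp_zero]
      obtain ⟨β₂, hβ₂⟩ : ∃ β₂ : BP ⟶ Z, g ≫ φc = pP ≫ β₂ := Triangle.yoneda_exact₂ _ hTPnd (g ≫ φc) h1
      try simp only [Triangle.mk_mor₁, Triangle.mk_mor₂, Triangle.mk_mor₃] at hβ₂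
      have hβ₂0 : β₂ = 0 := t.orth' hBPt hZge (by omega) β₂
      have hgφ : g ≫ φc = 0 := by rw [hβ₂, hβ₂0, comp_zero]
      obtain ⟨ψ, hψ⟩ : ∃ ψ : I₀ ⟶ Z, φc = h ≫ ψ := Triangle.yoneda_exact₂ _ hTd φc hgφ
      try simp only [Triangle.mk_mor₁, Triangle.mk_mor₂, Triangle.mk_mor₃] at hψ
      exact ⟨ψ, hψ.symm⟩
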